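/- For all real z and Δt with 0 ≤ z ≤ 1/2 and 0 ≤ Δt ≤ z/4: arcsin(z + Δt·(2 + 2z)) + 8·arcsin(z) − 8·arcsin( (sin(½·arcsin z) − 2Δt)/(1 + 2Δt) ) ≤ 9.62·z + 1.22·Δt·(2 + 2z) ≤ 10.6·z. -/

import Mathlib

open Real

/-- Half-angle based cubic lower bound for sin on `[0,2]`. -/
lemma aux_sin_lb {x : ℝ} (h0 : 0 ≤ x) (h1 : x ≤ 2) :
    x - 11/64 * x^3 ≤ Real.sin x := by
  rcases eq_or_lt_of_le h0 with h | h
  · simp [← h]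
  have h4 : x/4 - (x/4)^3/4 < Real.sin (x/4) :=
    by have := Real.sin_gt_sub_cube (x := x/4) (by linarith); linarith [pow_nonneg (by linarith : (0:ℝ) ≤ x/4) 3]
  have c4 : (1:ℝ) - (x/4)^2/2 ≤ Real.cos (x/4) := Real.one_sub_sq_div_two_le_cos
  have c2 : (1:ℝ) - (x/2)^2/2 ≤ Real.cos (x/2) := Real.one_sub_sq_div_two_le_cos
  have e2 : Real.sin (x/2) = 2 * Real.sin (x/4) * Real.cos (x/4) := by
    rw [← Real.sin_two_mul]; ring_nf
  have e1 : Real.sin x = 2 * Real.sin (x/2) * Real.cos (x/2) := by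
    rw [← Real.sin_two_mul]; ring_nf
  have hA : 0 ≤ x/4 - (x/4)^3/4 := by nlinarith
  have hC4 : 0 ≤ (1:ℝ) - (x/4)^2/2 := by nlinarith
  have hC2 : 0 ≤ (1:ℝ) - (x/2)^2/2 := by nlinarith
  have hs4 : 0 ≤ Real.sin (x/4) := le_trans hA h4.le
  have hB : 2 * (x/4 - (x/4)^3/4) * (1 - (x/4)^2/2) ≤ Real.sin (x/2) := by
    rw [e2]
    nlinarith [mul_le_mul h4.le c4 hC4 hs4]
  have hB0 : 0 ≤ 2 * (x/4 - (x/4)^3/4) * (1 - (x/4)^2/2) := by positivity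
  have hs2 : 0 ≤ Real.sin (x/2) := le_trans hB0 hB
  rw [e1]
  have hx5 : 0 ≤ x^5 * (104 - x^2) :=
    mul_nonneg (pow_nonneg h0 5) (by nlinarith)
  nlinarith [mul_le_mul hB c2 hC2 hs2, hx5]

/-- Quartic upper bound for cos on `[0,2]`. -/
lemma aux_cos_ub {x : ℝ} (h0 : 0 ≤ x) (h1 : x ≤ 2) :
    Real.cos x ≤ 1 - x^2/2 + 11/256 * x^4 := by
  have e : Real.cos x = Real.cos (x/2)^2 - Real.sin (x/2)^2 := by
    rw [← Real.cos_two_mul']; ring_nf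
  have hpyth := Real.sin_sq_add_cos_sq (x/2)
  have hA : x/2 - 11/64 * (x/2)^3 ≤ Real.sin (x/2) := aux_sin_lb (by linarith) (by linarith)
  have hA0 : 0 ≤ x/2 - 11/64 * (x/2)^3 := by
    nlinarith [mul_nonneg h0 (by nlinarith : (0:ℝ) ≤ 4 - x^2)]
  have : (x/2 - 11/64 * (x/2)^3)^2 ≤ Real.sin (x/2)^2 := by
    nlinarith [mul_le_mul hA hA hA0 (le_trans hA0 hA)]
  nlinarith [this, pow_nonneg h0 6]

/-- Quintic upper bound for sin on `[0,2]`. -/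
lemma aux_sin_ub3 {x : ℝ} (h0 : 0 ≤ x) (h1 : x ≤ 2) :
    Real.sin x ≤ x - x^3/8 + 11/4096 * x^5 := by
  have e1 : Real.sin x = 2 * Real.sin (x/2) * Real.cos (x/2) := by
    rw [← Real.sin_two_mul]; ring_nf
  have hs : Real.sin (x/2) ≤ x/2 := Real.sin_le (by linarith)
  have hs0 : 0 ≤ Real.sin (x/2) := Real.sin_nonneg_of_nonneg_of_le_pi (by linarith)
    (by linarith [Real.pi_gt_three])
  have hc0 : 0 ≤ Real.cos (x/2) := by
    have := Real.one_sub_sq_div_two_le_cos (x := x/2); nlinarith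
  have hc : Real.cos (x/2) ≤ 1 - (x/2)^2/2 + 11/256 * (x/2)^4 :=
    aux_cos_ub (by linarith) (by linarith)
  rw [e1]
  nlinarith [mul_le_mul hs hc hc0 (by linarith : (0:ℝ) ≤ x/2)]

/-- Sharper cubic upper bound for sin on `[0,2/5]`. -/
lemma aux_sin_ub5 {q : ℝ} (h0 : 0 ≤ q) (h1 : q ≤ 2/5) :
    Real.sin q ≤ q - 31/200 * q^3 := by
  have e1 : Real.sin q = 2 * Real.sin (q/2) * Real.cos (q/2) := by
    rw [← Real.sin_two_mul]; ring_nf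
  have hS : Real.sin (q/2) ≤ q/2 - (q/2)^3/8 + 11/4096 * (q/2)^5 :=
    aux_sin_ub3 (by linarith) (by linarith)
  have hC : Real.cos (q/2) ≤ 1 - (q/2)^2/2 + 11/256 * (q/2)^4 :=
    aux_cos_ub (by linarith) (by linarith)
  have hs0 : 0 ≤ Real.sin (q/2) := Real.sin_nonneg_of_nonneg_of_le_pi (by linarith)
    (by linarith [Real.pi_gt_three])
  have hc0 : 0 ≤ Real.cos (q/2) := by
    have := Real.one_sub_sq_div_two_le_cos (x := q/2); nlinarith
  have hS0 : (0:ℝ) ≤ q/2 - (q/2)^3/8 + 11/4096 * (q/2)^5 := by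
    nlinarith [mul_nonneg h0 (by nlinarith : (0:ℝ) ≤ 32 - q^2), pow_nonneg h0 5]
  have hq2 : q^2 ≤ 4/25 := by nlinarith
  have inner : (0:ℝ) ≤ 1/800 - 443/65536*q^2 + 55/524288*q^4 - 121/268435456*q^6 := by
    nlinarith [sq_nonneg q, sq_nonneg (q^2), hq2,
      mul_nonneg (sub_nonneg.2 hq2) (sq_nonneg q),
      mul_nonneg (mul_nonneg (sub_nonneg.2 hq2) (sq_nonneg q)) (sq_nonneg q)]
  have key : 2 * (q/2 - (q/2)^3/8 + 11/4096 * (q/2)^5) * (1 - (q/2)^2/2 + 11/256 * (q/2)^4)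
      ≤ q - 31/200 * q^3 := by
    nlinarith [mul_nonneg (pow_nonneg h0 3) inner]
  rw [e1]
  nlinarith [mul_le_mul hS hC hc0 hS0, key]

/-- Cubic upper bound for arcsin on `[0,1/2]`. -/
lemma aux_arcsin_ub {z : ℝ} (h0 : 0 ≤ z) (h1 : z ≤ 1/2) :
    Real.arcsin z ≤ z + 21/100 * z^3 := by
  obtain ⟨x, hxdef⟩ : ∃ x, x = z + 21/100 * z^3 := ⟨_, rfl⟩
  have hz3 : z^3 ≤ 1/8 := by nlinarith [pow_le_pow_left₀ h0 h1 3]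
  have hx0 : 0 ≤ x := by rw [hxdef]; positivity
  have hx2 : x ≤ 2 := by rw [hxdef]; nlinarith
  have hz2 : z^2 ≤ 1/4 := by nlinarith
  have hsin : z ≤ Real.sin x := by
    have hlb := aux_sin_lb hx0 hx2
    have hpoly : z ≤ x - 11/64 * x^3 := by
      rw [hxdef]
      nlinarith [pow_nonneg h0 3, mul_nonneg (sub_nonneg.2 hz2) (pow_nonneg h0 3),
        mul_nonneg (mul_nonneg (sub_nonneg.2 hz2) (sub_nonneg.2 hz2)) (pow_nonneg h0 3),
        mul_nonneg (mul_nonneg (mul_nonneg (sub_nonneg.2 hz2) (sub_nonneg.2 hz2))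
          (sub_nonneg.2 hz2)) (pow_nonneg h0 3)]
    linarith
  have hπ := Real.pi_gt_three
  have hxpi : x ≤ π/2 := by rw [hxdef]; nlinarith
  have hx' : x ≤ z + 21/100 * z^3 := le_of_eq hxdef
  calc Real.arcsin z ≤ Real.arcsin (Real.sin x) := Real.monotone_arcsin hsin
    _ = x := Real.arcsin_sin (by linarith) hxpi
    _ ≤ z + 21/100 * z^3 := hx'

/-- Linear upper bound for arcsin on `[0,7/8]`. -/
lemma aux_arcsin_lin {y : ℝ} (h0 : 0 ≤ y) (h1 : y ≤ 7/8) :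
    Real.arcsin y ≤ 61/50 * y := by
  have hπl := Real.pi_gt_d6
  have hπu := Real.pi_lt_d6
  have key : y ≤ Real.sin (61/50 * y) := by
    rcases le_or_gt y (4/5) with hc | hc
    · have := aux_sin_lb (x := 61/50 * y) (by linarith) (by linarith)
      nlinarith [mul_nonneg h0 (by nlinarith : (0:ℝ) ≤ 16/25 - y^2)]
    · obtain ⟨q, hqdef⟩ : ∃ q : ℝ, q = π/4 - 61/100 * y := ⟨_, rfl⟩
      have hql : 0.251648 ≤ q := by rw [hqdef]; linarith
      have hqu : q ≤ 0.2974 := by rw [hqdef]; linarith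
      have ht : 61/50 * y = π/2 - 2*q := by rw [hqdef]; ring
      have e1 : Real.sin (π/2 - 2*q) = Real.cos (2*q) := Real.sin_pi_div_two_sub (2*q)
      have e2 : Real.cos (2*q) = 1 - 2 * Real.sin q ^ 2 := by
        rw [Real.cos_two_mul']
        nlinarith [Real.sin_sq_add_cos_sq q]
      have hsq : Real.sin q ≤ q - 31/200 * q^3 := aux_sin_ub5 (by linarith) (by linarith)
      have hsq0 : 0 ≤ Real.sin q := Real.sin_nonneg_of_nonneg_of_le_pi (by linarith)
        (by linarith)
      have hQ0 : 0 ≤ q - 31/200 * q^3 := by nlinarith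
      have hsq2 : Real.sin q ^ 2 ≤ (q - 31/200 * q^3)^2 := by
        nlinarith [mul_le_mul hsq hsq hsq0 hQ0]
      rw [ht, e1, e2]
      nlinarith [hsq2, mul_nonneg (sub_nonneg.2 hql) (sub_nonneg.2 hqu),
        sq_nonneg (q - 0.2517), sq_nonneg (q - 0.26), sq_nonneg (q^2 - 0.07),
        mul_nonneg (mul_nonneg (sub_nonneg.2 hql) (sub_nonneg.2 hqu)) (sq_nonneg q),
        mul_nonneg (mul_nonneg (sub_nonneg.2 hql) (sub_nonneg.2 hql)) (sub_nonneg.2 hqu)]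
  have hpi2 : 61/50 * y ≤ π/2 := by linarith
  calc Real.arcsin y ≤ Real.arcsin (Real.sin (61/50 * y)) := Real.monotone_arcsin key
    _ = 61/50 * y := Real.arcsin_sin (by linarith) hpi2

/-- `sin(arcsin z / 2) ≥ z/2 + z³/16`. -/
lemma aux_s_lb {z : ℝ} (h0 : 0 ≤ z) (h1 : z ≤ 1) :
    z/2 + z^3/16 ≤ Real.sin (Real.arcsin z / 2) := by
  have hθ0 : 0 ≤ Real.arcsin z / 2 := by
    have := Real.arcsin_nonneg.2 h0; linarith
  have hθ1 : Real.arcsin z / 2 ≤ π/4 := by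
    have := Real.arcsin_le_pi_div_two z; linarith
  have hπ := Real.pi_gt_three
  have hz : z = 2 * Real.sin (Real.arcsin z / 2) * Real.cos (Real.arcsin z / 2) := by
    rw [← Real.sin_two_mul]
    rw [show 2 * (Real.arcsin z / 2) = Real.arcsin z by ring,
      Real.sin_arcsin (by linarith) h1]
  obtain ⟨s, hs⟩ : ∃ s, s = Real.sin (Real.arcsin z / 2) := ⟨_, rfl⟩
  obtain ⟨c, hc⟩ : ∃ c, c = Real.cos (Real.arcsin z / 2) := ⟨_, rfl⟩
  have hs0 : 0 ≤ s := by
    rw [hs]; exact Real.sin_nonneg_of_nonneg_of_le_pi hθ0 (by linarith)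
  have hc0 : 0 ≤ c := by
    rw [hc]; exact Real.cos_nonneg_of_mem_Icc ⟨by linarith, by linarith⟩
  have hc1 : c ≤ 1 := hc ▸ Real.cos_le_one _
  have hpyth : s^2 + c^2 = 1 := by rw [hs, hc]; exact Real.sin_sq_add_cos_sq _
  rw [← hs]
  have hz' : z = 2 * s * c := by rw [hs, hc]; exact hz
  rw [hz']
  have key : 0 ≤ s * (1 - c) * (1 - (1 + c) * c^3 / 2) := by
    have h2 : 0 ≤ 1 - (1 + c) * c^3 / 2 := by nlinarith [pow_nonneg hc0 3]
    exact mul_nonneg (mul_nonneg hs0 (by linarith)) h2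
  have e : s - (2*s*c/2 + (2*s*c)^3/16) =
      s*(1-c)*(1 - (1+c)*c^3/2) - (s*c^3/2)*(s^2+c^2-1) := by ring
  have hzero : s * c^3 / 2 * (s^2 + c^2 - 1) = 0 := by rw [hpyth]; ring
  linarith [key, e, hzero]

/-- The key estimate inside Lemma 13 of the paper: for `0 ≤ z ≤ 1/2` and
`0 ≤ Δt ≤ z/4`, the endpoint movement bound `ΔE(z, Δt)` satisfies
`ΔE(z, Δt) ≤ 9.62·z + 1.22·Δt·(2+2z) ≤ 10.6·z`. -/
theorem stmt_14 (z Δt : ℝ) (hz₀ : 0 ≤ z) (hz₁ : z ≤ 1/2)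
    (hΔt₀ : 0 ≤ Δt) (hΔt₁ : Δt ≤ z / 4) :
    Real.arcsin (z + Δt * (2 + 2 * z)) + 8 * Real.arcsin z -
        8 * Real.arcsin ((Real.sin (1/2 * Real.arcsin z) - 2 * Δt) / (1 + 2 * Δt))
      ≤ 9.62 * z + 1.22 * Δt * (2 + 2 * z) ∧
    9.62 * z + 1.22 * Δt * (2 + 2 * z) ≤ 10.6 * z := by
  constructor
  · rw [show (1:ℝ)/2 * Real.arcsin z = Real.arcsin z / 2 from by ring]
    have hy0 : 0 ≤ z + Δt * (2 + 2 * z) := by nlinarith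
    have hy1 : z + Δt * (2 + 2 * z) ≤ 7/8 := by
      nlinarith [mul_nonneg (sub_nonneg.2 hΔt₁) (by linarith : (0:ℝ) ≤ 2 + 2*z),
        mul_nonneg hz₀ (sub_nonneg.2 hz₁)]
    have h1 : Real.arcsin (z + Δt * (2 + 2 * z)) ≤ 61/50 * (z + Δt * (2 + 2 * z)) :=
      aux_arcsin_lin hy0 hy1
    have ha : Real.arcsin z ≤ z + 21/100 * z^3 := aux_arcsin_ub hz₀ hz₁
    have hs : z/2 + z^3/16 ≤ Real.sin (Real.arcsin z / 2) := aux_s_lb hz₀ (by linarith)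
    have hs1 : Real.sin (Real.arcsin z / 2) ≤ 1 := Real.sin_le_one _
    have hden : (0:ℝ) < 1 + 2 * Δt := by linarith
    obtain ⟨w, hwdef⟩ : ∃ w, w = (Real.sin (Real.arcsin z / 2) - 2 * Δt) / (1 + 2 * Δt) :=
      ⟨_, rfl⟩
    have hz3 : 0 ≤ z^3 := by positivity
    have hw0 : 0 ≤ w := by
      rw [hwdef]
      apply div_nonneg _ (by linarith)
      linarith
    have hw1 : w ≤ 1 := by
      rw [hwdef, div_le_one hden]; linarith
    have harc : w ≤ Real.arcsin w := by
      have h2 : Real.sin (Real.arcsin w) ≤ Real.arcsin w :=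
        Real.sin_le (Real.arcsin_nonneg.2 hw0)
      rwa [Real.sin_arcsin (by linarith) hw1] at h2
    have hkey : Real.arcsin z - 21/20 * z ≤ w := by
      rw [hwdef, le_div_iff₀ hden]
      have ha' : (Real.arcsin z - 21/20 * z) * (1 + 2 * Δt)
          ≤ (-(1/20) * z + 21/100 * z^3) * (1 + 2 * Δt) := by
        apply mul_le_mul_of_nonneg_right _ (by linarith)
        linarith
      have hpoly : (-(1/20) * z + 21/100 * z^3) * (1 + 2 * Δt) ≤
          Real.sin (Real.arcsin z / 2) - 2 * Δt := by
        have hq : (-(1/20) * z + 21/100 * z^3) * (1 + 2 * Δt) + 2 * Δt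
            ≤ z/2 + z^3/16 := by
          nlinarith [mul_nonneg (sub_nonneg.2 hΔt₁) hz₀,
            mul_nonneg (sub_nonneg.2 hΔt₁) (sub_nonneg.2 hz₁),
            mul_nonneg (mul_nonneg (sub_nonneg.2 hΔt₁) hz₀) hz₀,
            mul_nonneg hΔt₀ hz₀, mul_nonneg (mul_nonneg hΔt₀ hz₀) hz₀,
            mul_nonneg (mul_nonneg hz₀ hz₀) (sub_nonneg.2 hz₁),
            mul_nonneg (mul_nonneg (mul_nonneg hz₀ hz₀) hz₀) (sub_nonneg.2 hz₁)]
        linarith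
      linarith
    have harcw : Real.arcsin z - 21/20 * z ≤ Real.arcsin w := le_trans hkey harc
    rw [← hwdef]
    norm_num
    linarith [h1, harcw]
  · nlinarith [mul_nonneg (sub_nonneg.2 hΔt₁) (by linarith : (0:ℝ) ≤ 2 + 2*z),
      mul_nonneg hz₀ (sub_nonneg.2 hz₁)]
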